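/- Let n ≥ 1, let γ and P be symmetric n×n real matrices with γ invertible, and define g(Ω) := γ + Ω² P + (Ω⁴/4) P γ⁻¹ P for Ω ∈ ℝ. Then for every Ω ≠ 0 such that the matrix γ + (Ω²/2) P is invertible, g(Ω) is invertible and g̈(Ω) = (1/2) ġ(Ω) g(Ω)⁻¹ ġ(Ω) + Ω⁻¹ ġ(Ω), where dots denote d/dΩ. Equivalently, ġ(Ω) g(Ω)⁻¹ ġ(Ω) = 4Ω² P γ⁻¹ P there. -/

import Mathlib

open scoped BigOperators Matrix

attribute [local instance] Matrix.normedAddCommGroup Matrix.normedSpace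

/-- converse direction in Lemma 3.3 of the paper.  The explicit quartic
family `g(Ω) = γ + Ω²P + (Ω⁴/4)Pγ⁻¹P` (the de Sitter Fefferman–Graham normal form)
satisfies the purely-magnetic ODE `g̈ = (1/2) ġ g⁻¹ ġ + Ω⁻¹ ġ`, and
`ġ g⁻¹ ġ = 4Ω² Pγ⁻¹P`, wherever `Ω ≠ 0` and `γ + (Ω²/2)P` is invertible. -/
theorem statement5
    (n : ℕ) (hn : 1 ≤ n)
    (γ P : Matrix (Fin n) (Fin n) ℝ)
    (hγs : γ.IsSymm) (hPs : P.IsSymm) (hγ : IsUnit γ)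
    (g : ℝ → Matrix (Fin n) (Fin n) ℝ)
    (hg : ∀ Ω : ℝ, g Ω = γ + Ω^2 • P + (Ω^4/4) • (P * γ⁻¹ * P)) :
    ∀ Ω : ℝ, Ω ≠ 0 → IsUnit (γ + (Ω^2/2) • P) →
      IsUnit (g Ω) ∧
      deriv (deriv g) Ω
        = (1/2 : ℝ) • (deriv g Ω * (g Ω)⁻¹ * deriv g Ω) + Ω⁻¹ • deriv g Ω ∧
      deriv g Ω * (g Ω)⁻¹ * deriv g Ω = (4*Ω^2) • (P * γ⁻¹ * P) := by
  intro Ω hΩ hA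
  set Q : Matrix (Fin n) (Fin n) ℝ := P * γ⁻¹ * P with hQ
  set A : Matrix (Fin n) (Fin n) ℝ := γ + (Ω^2/2) • P with hAdef
  have hγd : IsUnit γ.det := (Matrix.isUnit_iff_isUnit_det γ).mp hγ
  have hAd : IsUnit A.det := (Matrix.isUnit_iff_isUnit_det A).mp hA
  have hγγ : γ * γ⁻¹ = 1 := Matrix.mul_nonsing_inv γ hγd
  have hγγ' : γ⁻¹ * γ = 1 := Matrix.nonsing_inv_mul γ hγd
  have hAA : A * A⁻¹ = 1 := Matrix.mul_nonsing_inv A hAd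
  have hAA' : A⁻¹ * A = 1 := Matrix.nonsing_inv_mul A hAd
  have hcan1 : ∀ X : Matrix (Fin n) (Fin n) ℝ, γ * (γ⁻¹ * X) = X := by
    intro X; rw [← Matrix.mul_assoc, hγγ, Matrix.one_mul]
  have hQ' : P * (γ⁻¹ * P) = Q := by rw [hQ, Matrix.mul_assoc]
  -- g Ω = A γ⁻¹ A
  have hgA : g Ω = A * γ⁻¹ * A := by
    rw [hg, hAdef]
    simp only [add_mul, mul_add, Matrix.smul_mul, Matrix.mul_smul, smul_smul,
      Matrix.mul_assoc, hγγ', hcan1, hQ', Matrix.one_mul, Matrix.mul_one]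
    module
  -- derivative of g
  have hder : ∀ x : ℝ, HasDerivAt g ((2*x) • P + x^3 • Q) x := by
    intro x
    have hfun : g = fun t : ℝ => γ + t^2 • P + (t^4/4) • Q := funext fun t => hg t
    rw [hfun]
    have h1 : HasDerivAt (fun t : ℝ => t^2) (2*x) x := by
      simpa using hasDerivAt_pow 2 x
    have h2 : HasDerivAt (fun t : ℝ => t^4/4) (x^3) x := by
      have := (hasDerivAt_pow 4 x).div_const 4
      rw [show x^3 = ((4:ℕ):ℝ) * x^(4-1)/4 by norm_num]
      exact this
    have := ((hasDerivAt_const x γ).add (h1.smul_const P)).add (h2.smul_const Q)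
    rw [zero_add] at this
    exact this
  have hdg : deriv g = fun x : ℝ => (2*x) • P + x^3 • Q := funext fun x => (hder x).deriv
  have hdgΩ : deriv g Ω = (2*Ω) • P + Ω^3 • Q := by rw [hdg]
  -- second derivative
  have hdder : deriv (deriv g) Ω = (2:ℝ) • P + (3*Ω^2) • Q := by
    rw [hdg]
    have h1 : HasDerivAt (fun t : ℝ => 2*t) (2:ℝ) Ω := by
      simpa using (hasDerivAt_id Ω).const_mul (2:ℝ)
    have h2 : HasDerivAt (fun t : ℝ => t^3) (3*Ω^2) Ω := by
      simpa using hasDerivAt_pow 3 Ω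
    exact ((h1.smul_const P).add (h2.smul_const Q)).deriv
  -- g Ω is a unit
  have hgU : IsUnit (g Ω) := by
    rw [hgA]
    exact (hA.mul (Matrix.isUnit_nonsing_inv_iff.mpr hγ)).mul hA
  -- inverse of g
  have hginv : (g Ω)⁻¹ = A⁻¹ * γ * A⁻¹ := by
    rw [hgA, Matrix.mul_inv_rev, Matrix.mul_inv_rev, Matrix.nonsing_inv_nonsing_inv γ hγd,
      Matrix.mul_assoc]
  -- ġ factorizations
  have hfac1 : deriv g Ω = (2*Ω) • (P * γ⁻¹ * A) := by
    rw [hdgΩ, hAdef]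
    simp only [mul_add, add_mul, Matrix.mul_smul, Matrix.smul_mul, Matrix.mul_assoc,
      hγγ', hcan1, hQ', Matrix.mul_one, Matrix.one_mul]
    module
  have hfac2 : deriv g Ω = (2*Ω) • (A * γ⁻¹ * P) := by
    rw [hdgΩ, hAdef]
    simp only [mul_add, add_mul, Matrix.mul_smul, Matrix.smul_mul, Matrix.mul_assoc,
      hγγ', hcan1, hQ', Matrix.mul_one, Matrix.one_mul]
    module
  -- the key product
  have hprod : deriv g Ω * (g Ω)⁻¹ * deriv g Ω = (4*Ω^2) • Q := by
    calc deriv g Ω * (g Ω)⁻¹ * deriv g Ω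
        = ((2*Ω) • (P * γ⁻¹ * A)) * (A⁻¹ * γ * A⁻¹) * ((2*Ω) • (A * γ⁻¹ * P)) := by
          rw [← hfac1, ← hfac2, hginv]
      _ = ((2*Ω)*(2*Ω)) • (P * γ⁻¹ * (A * A⁻¹) * γ * (A⁻¹ * A) * γ⁻¹ * P) := by
          simp only [Matrix.smul_mul, Matrix.mul_smul, smul_smul, Matrix.mul_assoc]
      _ = (4*Ω^2) • Q := by
          rw [hAA, hAA', Matrix.mul_one, Matrix.mul_one, Matrix.mul_assoc P γ⁻¹ γ, hγγ',
            Matrix.mul_one, ← hQ]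
          ring_nf
  refine ⟨hgU, ?_, hprod⟩
  rw [hdder, hprod, hdgΩ]
  match_scalars <;> field_simp <;> ring
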